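/- Let p = (p_j) ⊆ [1,∞) be a sequence and let S ⊆ ℓ^{(p_n)} be the set of sequences with only finitely many nonzero terms. Then the τ_{ρ_p}-closure of S equals ℓ^{(p_n)}; in particular, (ℓ^{(p_n)}, τ_{ρ_p}) is separable. -/

import Mathlib

open Filter Topology ENNReal

/-- The Nakano modular `ρ_p((a_j)) = Σ_j |a_j|^{p_j}` on `ℝ^ℕ`. -/
noncomputable def seqModular (p : ℕ → ℝ) (a : ℕ → ℝ) : ℝ≥0∞ :=
  ∑' j, ENNReal.ofReal (|a j| ^ p j)

/-- `X_ρ`, the modular vector space associated to a modular `ρ`. -/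
def modularSet {X : Type*} [AddCommGroup X] [Module ℝ X] (ρ : X → ℝ≥0∞) : Set X :=
  {v : X | ∃ l : ℝ, 0 < l ∧ ρ (l • v) < ⊤}

/-- A set `A ⊆ X_ρ` is `τ_ρ`-open. -/
def IsTauRhoOpen {X : Type*} [AddCommGroup X] [Module ℝ X] (ρ : X → ℝ≥0∞) (A : Set X) : Prop :=
  A ⊆ modularSet ρ ∧
    ∀ x ∈ A, ∃ ε : ℝ, 0 < ε ∧ {y ∈ modularSet ρ | ρ (y - x) < ENNReal.ofReal ε} ⊆ A

/-- A set `C ⊆ X_ρ` is `τ_ρ`-closed if its complement in `X_ρ` is `τ_ρ`-open. -/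
def IsTauRhoClosed {X : Type*} [AddCommGroup X] [Module ℝ X] (ρ : X → ℝ≥0∞) (C : Set X) : Prop :=
  C ⊆ modularSet ρ ∧ IsTauRhoOpen ρ (modularSet ρ \ C)

/-- The `τ_ρ`-closure of `A`. -/
def tauRhoClosure {X : Type*} [AddCommGroup X] [Module ℝ X] (ρ : X → ℝ≥0∞) (A : Set X) : Set X :=
  ⋂₀ {C : Set X | A ⊆ C ∧ IsTauRhoClosed ρ C}

namespace SeqModularAux

variable {p : ℕ → ℝ}

lemma p_pos (hp : ∀ j, 1 ≤ p j) (j : ℕ) : 0 < p j := lt_of_lt_of_le one_pos (hp j)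

lemma seqModular_mono (hp : ∀ j, 1 ≤ p j) {a b : ℕ → ℝ} (h : ∀ j, |a j| ≤ |b j|) :
    seqModular p a ≤ seqModular p b :=
  ENNReal.tsum_le_tsum fun j => ENNReal.ofReal_le_ofReal
    (Real.rpow_le_rpow (abs_nonneg _) (h j) (zero_le_one.trans (hp j)))

lemma seqModular_zero (hp : ∀ j, 1 ≤ p j) : seqModular p 0 = 0 := by
  refine ENNReal.tsum_eq_zero.2 fun j => ?_
  simp [Real.zero_rpow (p_pos hp j).ne']

lemma finsupport_mem (hp : ∀ j, 1 ≤ p j) {a : ℕ → ℝ} (ha : (Function.support a).Finite) :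
    a ∈ modularSet (seqModular p) := by
  refine ⟨1, one_pos, ?_⟩
  rw [one_smul]
  have h : seqModular p a = ∑ j ∈ ha.toFinset, ENNReal.ofReal (|a j| ^ p j) := by
    refine tsum_eq_sum fun j hj => ?_
    have hj0 : a j = 0 := by
      by_contra h
      exact hj (ha.mem_toFinset.2 h)
    simp [hj0, Real.zero_rpow (p_pos hp j).ne']
  rw [h]
  exact ENNReal.sum_lt_top.2 fun j _ => ENNReal.ofReal_lt_top

lemma tail_small {b : ℕ → ℝ} (hb : seqModular p b < ⊤) {ε : ℝ≥0∞} (hε : 0 < ε) (N : ℕ) :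
    ∃ m, N ≤ m ∧ ∑' i, ENNReal.ofReal (|b (i + m)| ^ p (i + m)) < ε := by
  have h := ENNReal.tendsto_sum_nat_add (fun j => ENNReal.ofReal (|b j| ^ p j)) hb.ne
  have h2 := h.eventually_lt_const hε
  obtain ⟨m, hm1, hm2⟩ := (h2.and (eventually_ge_atTop N)).exists
  exact ⟨m, hm2, hm1⟩

lemma lt_top_of_tail (hp : ∀ j, 1 ≤ p j) {a b : ℕ → ℝ} (N : ℕ)
    (h : ∀ j, N ≤ j → |a j| ≤ |b j|) (hb : seqModular p b < ⊤) : seqModular p a < ⊤ := by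
  have hsplit := Summable.sum_add_tsum_nat_add' (f := fun j => ENNReal.ofReal (|a j| ^ p j)) (k := N)
    ENNReal.summable
  rw [seqModular, ← hsplit]
  refine ENNReal.add_lt_top.2 ⟨ENNReal.sum_lt_top.2 fun _ _ => ENNReal.ofReal_lt_top, ?_⟩
  calc ∑' i, ENNReal.ofReal (|a (i + N)| ^ p (i + N))
      ≤ ∑' i, ENNReal.ofReal (|b (i + N)| ^ p (i + N)) :=
        ENNReal.tsum_le_tsum fun i => ENNReal.ofReal_le_ofReal
          (Real.rpow_le_rpow (abs_nonneg _) (h _ (Nat.le_add_left N i))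
            (zero_le_one.trans (hp _)))
    _ ≤ seqModular p b := by
        rw [seqModular, ← Summable.sum_add_tsum_nat_add' (f := fun j => ENNReal.ofReal (|b j| ^ p j))
          (k := N) ENNReal.summable]
        exact le_add_self
    _ < ⊤ := hb

/-- Split a modular into a comparison on the head and a tail bound. -/
lemma split_bound (hp : ∀ j, 1 ≤ p j) {u v g : ℕ → ℝ} (m : ℕ)
    (hhead : ∀ j, j < m → u j = v j)
    (htail : ∀ j, m ≤ j → |u j| ≤ |g j|) :
    seqModular p u ≤ seqModular p v + ∑' i, ENNReal.ofReal (|g (i + m)| ^ p (i + m)) := by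
  set t2 : ℕ → ℝ≥0∞ := fun j => if j < m then 0 else ENNReal.ofReal (|g j| ^ p j) with ht2
  have h1 : ∀ j, ENNReal.ofReal (|u j| ^ p j) ≤ ENNReal.ofReal (|v j| ^ p j) + t2 j := by
    intro j
    by_cases hj : j < m
    · rw [hhead j hj]
      exact le_add_right le_rfl
    · refine le_add_left ?_
      simp only [ht2, if_neg hj]
      exact ENNReal.ofReal_le_ofReal
        (Real.rpow_le_rpow (abs_nonneg _) (htail j (not_lt.1 hj)) (zero_le_one.trans (hp _)))
  have h2 : ∑' j, t2 j = ∑' i, ENNReal.ofReal (|g (i + m)| ^ p (i + m)) := by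
    rw [← Summable.sum_add_tsum_nat_add' (f := t2) (k := m) ENNReal.summable]
    have : ∑ j ∈ Finset.range m, t2 j = 0 :=
      Finset.sum_eq_zero fun j hj => by simp [ht2, Finset.mem_range.1 hj]
    rw [this, zero_add]
    refine tsum_congr fun i => ?_
    simp [ht2, Nat.not_lt.2 (Nat.le_add_left m i)]
  calc seqModular p u ≤ ∑' j, (ENNReal.ofReal (|v j| ^ p j) + t2 j) := ENNReal.tsum_le_tsum h1
    _ = seqModular p v + ∑' j, t2 j := ENNReal.tsum_add
    _ = _ := by rw [h2]

/-- The interpolation points used in the chain argument. -/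
def pt (x : ℕ → ℝ) (s : ℝ) (N : ℕ) (f : ℕ → ℝ) : ℕ → ℝ := fun j =>
  if j < N then f j else s * x j

lemma main (hp : ∀ j, 1 ≤ p j) (T : Set (ℕ → ℝ))
    (hTsub : T ⊆ modularSet (seqModular p))
    (hT : ∀ (m : ℕ) (a : ℕ → ℝ), ∀ ε > (0 : ℝ), ∃ z ∈ T, (∀ j, m ≤ j → z j = 0) ∧
      seqModular p (z - fun j => if j < m then a j else 0) < ENNReal.ofReal ε)
    {C : Set (ℕ → ℝ)} (hTC : T ⊆ C) (hC : IsTauRhoClosed (seqModular p) C) :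
    modularSet (seqModular p) ⊆ C := by
  intro x hx
  obtain ⟨l, hl, hfin⟩ := hx
  set L := min l 1 with hLdef
  have hL0 : 0 < L := lt_min hl one_pos
  have hL1 : L ≤ 1 := min_le_right _ _
  have hLl : L ≤ l := min_le_left _ _
  have hLfin : seqModular p (L • x) < ⊤ := by
    refine lt_of_le_of_lt (seqModular_mono hp fun j => ?_) hfin
    simp only [Pi.smul_apply, smul_eq_mul, abs_mul]
    exact mul_le_mul_of_nonneg_right (by rw [abs_of_pos hL0, abs_of_pos hl]; exact hLl)
      (abs_nonneg _)
  -- membership of the interpolation points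
  have mem_pt : ∀ s : ℝ, 0 ≤ s → s ≤ 1 → ∀ N f, pt x s N f ∈ modularSet (seqModular p) := by
    intro s hs0 hs1 N f
    refine ⟨L, hL0, lt_top_of_tail hp N (fun j hj => ?_) hLfin⟩
    simp only [Pi.smul_apply, smul_eq_mul, pt, if_neg (Nat.not_lt.2 hj), abs_mul]
    have h1 : |s| * |x j| ≤ |x j| := by
      have := mul_le_mul_of_nonneg_right (by rw [abs_of_nonneg hs0]; exact hs1 : |s| ≤ 1)
        (abs_nonneg (x j))
      linarith [this]
    exact mul_le_mul_of_nonneg_left h1 (abs_nonneg _)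
  -- base case: once `s ≤ L` we can jump into `T ⊆ C`
  have base : ∀ s : ℝ, 0 ≤ s → s ≤ L → ∀ N f, pt x s N f ∈ C := by
    intro s hs0 hsL N f
    by_contra hyC
    set y := pt x s N f with hy
    have hymem : y ∈ modularSet (seqModular p) := mem_pt s hs0 (hsL.trans hL1) N f
    obtain ⟨ε, hε, hball⟩ := hC.2.2 y ⟨hymem, hyC⟩
    obtain ⟨m, hmN, hmtail⟩ := tail_small hLfin (ENNReal.ofReal_pos.2 (half_pos hε)) N
    obtain ⟨z, hzT, hz0, hzρ⟩ := hT m y (ε / 2) (half_pos hε)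
    have hbound : seqModular p (z - y) < ENNReal.ofReal ε := by
      have hb := split_bound (u := z - y) (v := z - fun j => if j < m then y j else 0)
        (g := L • x) hp m
        (fun j hj => by simp [Pi.sub_apply, if_pos hj])
        (fun j hj => by
          have hyj : y j = s * x j := by
            rw [hy]; simp [pt, Nat.not_lt.2 (hmN.trans hj)]
          simp only [Pi.sub_apply, hz0 j hj, hyj, Pi.smul_apply, smul_eq_mul, zero_sub, abs_neg,
            abs_mul]
          exact mul_le_mul_of_nonneg_right
            (by rw [abs_of_nonneg hs0, abs_of_pos hL0]; exact hsL) (abs_nonneg _))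
      refine lt_of_le_of_lt hb ?_
      calc seqModular p (z - fun j => if j < m then y j else 0) +
            ∑' i, ENNReal.ofReal (|(L • x) (i + m)| ^ p (i + m))
          < ENNReal.ofReal (ε / 2) + ENNReal.ofReal (ε / 2) := ENNReal.add_lt_add hzρ hmtail
        _ = ENNReal.ofReal ε := by
            rw [← ENNReal.ofReal_add (half_pos hε).le (half_pos hε).le, add_halves]
    have hzmem : z ∈ modularSet (seqModular p) \ C := hball ⟨hTsub hzT, hbound⟩
    exact hzmem.2 (hTC hzT)
  -- step: from `s·(1-L)` up to `s`
  have step : ∀ s : ℝ, 0 ≤ s → s ≤ 1 → (∀ N f, pt x (s * (1 - L)) N f ∈ C) →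
      ∀ N f, pt x s N f ∈ C := by
    intro s hs0 hs1 hstep N f
    by_contra hyC
    set y := pt x s N f with hy
    have hymem : y ∈ modularSet (seqModular p) := mem_pt s hs0 hs1 N f
    obtain ⟨ε, hε, hball⟩ := hC.2.2 y ⟨hymem, hyC⟩
    obtain ⟨m, hmN, hmtail⟩ := tail_small hLfin (ENNReal.ofReal_pos.2 hε) N
    set y' := pt x (s * (1 - L)) m y with hy'
    have hy'C : y' ∈ C := hstep m y
    have hbound : seqModular p (y' - y) < ENNReal.ofReal ε := by
      have hb := split_bound (u := y' - y) (v := 0) (g := L • x) hp m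
        (fun j hj => by simp [hy', Pi.sub_apply, pt, if_pos hj])
        (fun j hj => by
          have hyj : y j = s * x j := by
            rw [hy]; simp [pt, Nat.not_lt.2 (hmN.trans hj)]
          have hy'j : y' j = s * (1 - L) * x j := by
            rw [hy']; simp [pt, Nat.not_lt.2 hj]
          simp only [Pi.sub_apply, hyj, hy'j, Pi.smul_apply, smul_eq_mul]
          have heq : s * (1 - L) * x j - s * x j = -(s * (L * x j)) := by ring
          rw [heq, abs_neg]
          simp only [abs_mul]
          have h1 : |s| ≤ 1 := by rw [abs_of_nonneg hs0]; exact hs1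
          exact (mul_le_mul_of_nonneg_right h1
            (mul_nonneg (abs_nonneg L) (abs_nonneg (x j)))).trans_eq (one_mul _))
      rw [seqModular_zero hp, zero_add] at hb
      exact lt_of_le_of_lt hb hmtail
    have : y' ∈ modularSet (seqModular p) \ C := by
      refine hball ⟨?_, hbound⟩
      exact mem_pt _ (mul_nonneg hs0 (by linarith)) (by nlinarith) m y
    exact this.2 hy'C
  -- chain the steps
  have hchain : ∀ d k : ℕ, (∀ N f, pt x ((1 - L) ^ (k + d)) N f ∈ C) →
      ∀ N f, pt x ((1 - L) ^ k) N f ∈ C := by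
    intro d
    induction d with
    | zero => intro k h; simpa using h
    | succ d ih =>
      intro k h
      refine step _ (pow_nonneg (by linarith) k) (pow_le_one₀ (by linarith) (by linarith)) ?_
      rw [← pow_succ]
      refine ih (k + 1) ?_
      rw [show k + 1 + d = k + (d + 1) from by omega]
      exact h
  obtain ⟨K, hK⟩ := exists_pow_lt_of_lt_one hL0 (by linarith : 1 - L < 1)
  have pK : ∀ N f, pt x ((1 - L) ^ (0 + K)) N f ∈ C := by
    rw [zero_add]
    exact base _ (pow_nonneg (by linarith) K) hK.le
  have p0 := hchain K 0 pK 0 (fun _ => 0)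
  have hxeq : pt x ((1 - L) ^ 0) 0 (fun _ => 0) = x := by
    funext j
    simp [pt]
  rwa [hxeq] at p0

lemma modularSet_closed : IsTauRhoClosed (seqModular p) (modularSet (seqModular p)) := by
  refine ⟨subset_rfl, ?_⟩
  rw [Set.diff_self]
  exact ⟨Set.empty_subset _, fun x hx => hx.elim⟩

lemma closure_eq (hp : ∀ j, 1 ≤ p j) (T : Set (ℕ → ℝ))
    (hTsub : T ⊆ modularSet (seqModular p))
    (hT : ∀ (m : ℕ) (a : ℕ → ℝ), ∀ ε > (0 : ℝ), ∃ z ∈ T, (∀ j, m ≤ j → z j = 0) ∧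
      seqModular p (z - fun j => if j < m then a j else 0) < ENNReal.ofReal ε) :
    tauRhoClosure (seqModular p) T = modularSet (seqModular p) := by
  apply subset_antisymm
  · exact Set.sInter_subset_of_mem ⟨hTsub, modularSet_closed⟩
  · intro x hx
    refine Set.mem_sInter.2 fun C hC => ?_
    exact main hp T hTsub hT hC.1 hC.2 hx

lemma rpow_le_of_le_one {t c pj : ℝ} (ht : 0 ≤ t) (h1 : t ≤ 1) (hc : t ≤ c) (hpj : 1 ≤ pj) :
    t ^ pj ≤ c := by
  rcases eq_or_lt_of_le ht with h | h
  · rw [← h, Real.zero_rpow (by linarith : pj ≠ 0)]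
    linarith
  · calc t ^ pj ≤ t ^ (1 : ℝ) := Real.rpow_le_rpow_of_exponent_ge h h1 hpj
      _ = t := Real.rpow_one t
      _ ≤ c := hc

end SeqModularAux

/-- The `τ_{ρ_p}`-closure of the set of finitely supported sequences is all of
`ℓ^{(p_n)}`; in particular `(ℓ^{(p_n)}, τ_{ρ_p})` is separable. -/
theorem finitely_supported_dense_in_lp_seq (p : ℕ → ℝ) (hp : ∀ j, 1 ≤ p j) :
    tauRhoClosure (seqModular p) {a : ℕ → ℝ | (Function.support a).Finite} =
      modularSet (seqModular p) ∧
    ∃ D : Set (ℕ → ℝ), D.Countable ∧ D ⊆ modularSet (seqModular p) ∧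
      tauRhoClosure (seqModular p) D = modularSet (seqModular p) := by
  classical
  constructor
  · refine SeqModularAux.closure_eq hp _ ?_ ?_
    · intro a ha
      exact SeqModularAux.finsupport_mem hp ha
    · intro m a ε hε
      refine ⟨fun j => if j < m then a j else 0, ?_, fun j hj => if_neg (Nat.not_lt.2 hj), ?_⟩
      · exact Set.Finite.subset (Set.finite_Iio m) fun j hj => by
          by_contra hjm
          exact hj (if_neg (by simpa [Set.mem_Iio] using hjm))
      · rw [sub_self, SeqModularAux.seqModular_zero hp]
        exact ENNReal.ofReal_pos.2 hε
  · set F : (Σ m : ℕ, Fin m → ℚ) → ℕ → ℝ := fun q j =>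
      if h : j < q.1 then (q.2 ⟨j, h⟩ : ℝ) else 0 with hF
    refine ⟨Set.range F, Set.countable_range F, ?_, ?_⟩
    · rintro _ ⟨q, rfl⟩
      refine SeqModularAux.finsupport_mem hp (Set.Finite.subset (Set.finite_Iio q.1) ?_)
      intro j hj
      by_contra hjm
      apply hj
      have hnot : ¬ j < q.1 := Nat.not_lt.2 (by simpa [Set.mem_Iio] using hjm)
      simp [hF, hnot]
    · refine SeqModularAux.closure_eq hp _ ?_ ?_
      · rintro _ ⟨q, rfl⟩
        refine SeqModularAux.finsupport_mem hp (Set.Finite.subset (Set.finite_Iio q.1) ?_)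
        intro j hj
        by_contra hjm
        apply hj
        have hnot : ¬ j < q.1 := Nat.not_lt.2 (by simpa [Set.mem_Iio] using hjm)
        simp [hF, hnot]
      · intro m a ε hε
        set δ : ℝ := min 1 (ε / (2 * (m + 1))) with hδdef
        have hδ0 : 0 < δ := lt_min one_pos (by positivity)
        choose q hq using fun j => exists_rat_near (a j) hδ0
        set z : ℕ → ℝ := F ⟨m, fun i => q i⟩ with hz
        refine ⟨z, Set.mem_range_self _, fun j hj => by simp [hz, hF, Nat.not_lt.2 hj], ?_⟩
        have hterm : ∀ j, ENNReal.ofReal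
            (|(z - fun j => if j < m then a j else 0) j| ^ p j) ≤
            if j < m then ENNReal.ofReal δ else 0 := by
          intro j
          by_cases hjm : j < m
          · rw [if_pos hjm]
            refine ENNReal.ofReal_le_ofReal ?_
            have hzj : z j = (q j : ℝ) := by simp [hz, hF, hjm]
            have habs : |(z - fun j => if j < m then a j else 0) j| = |a j - (q j : ℝ)| := by
              rw [Pi.sub_apply, hzj, if_pos hjm, abs_sub_comm]
            rw [habs]
            exact SeqModularAux.rpow_le_of_le_one (abs_nonneg _)
              ((hq j).le.trans (min_le_left _ _)) (hq j).le (hp j)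
          · rw [if_neg hjm]
            have hzj : z j = 0 := by simp [hz, hF, hjm]
            have : (z - fun j => if j < m then a j else 0) j = 0 := by
              rw [Pi.sub_apply, hzj, if_neg hjm, sub_zero]
            rw [this, abs_zero, Real.zero_rpow (SeqModularAux.p_pos hp j).ne',
              ENNReal.ofReal_zero]
        calc seqModular p (z - fun j => if j < m then a j else 0)
            ≤ ∑' j, if j < m then ENNReal.ofReal δ else (0 : ℝ≥0∞) :=
              ENNReal.tsum_le_tsum hterm
          _ = ∑ j ∈ Finset.range m, (if j < m then ENNReal.ofReal δ else (0 : ℝ≥0∞)) := by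
              refine tsum_eq_sum fun j hj => ?_
              rw [if_neg (by simpa using hj)]
          _ = ∑ j ∈ Finset.range m, ENNReal.ofReal δ := by
              refine Finset.sum_congr rfl fun j hj => ?_
              rw [if_pos (Finset.mem_range.1 hj)]
          _ = m • ENNReal.ofReal δ := by rw [Finset.sum_const, Finset.card_range]
          _ = ENNReal.ofReal (m * δ) := by
              rw [nsmul_eq_mul, ← ENNReal.ofReal_natCast m,
                ← ENNReal.ofReal_mul (Nat.cast_nonneg m)]
          _ < ENNReal.ofReal ε := by
              refine (ENNReal.ofReal_lt_ofReal_iff hε).2 ?_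
              have h1 : δ ≤ ε / (2 * (m + 1)) := min_le_right _ _
              have h2 : (0 : ℝ) ≤ (m : ℝ) := Nat.cast_nonneg m
              have h3 : (0 : ℝ) < 2 * ((m : ℝ) + 1) := by positivity
              have h4 : (m : ℝ) * δ ≤ (m : ℝ) * (ε / (2 * ((m : ℝ) + 1))) := by
                refine mul_le_mul_of_nonneg_left ?_ h2
                convert h1 using 2
              refine lt_of_le_of_lt h4 ?_
              rw [mul_div_assoc']
              rw [div_lt_iff₀ h3]
              nlinarith
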